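/- Define f = 0 on a fat Cantor set C ⊂ [0,1] of measure 1/2 and on each complementary interval (aₙᵏ, bₙᵏ) of generation n let f be a smooth nonnegative bump of height 2⁻ⁿ with all one-sided derivatives vanishing at the endpoints. Then: (i) for every x ∈ ℝ there exists ξ_x ∈ ℝ with liminf_{y→x} (f(y) − f(x) − ξ_x(y−x))/|y−x|² > −∞; (ii) for every x in C apart from the endpoints of the removed intervals and {0,1}, and for every ξ ∈ ℝ, limsup_{y→x} (f(y) − f(x) − ξ(y−x))/|y−x|² = +∞. -/

import Mathlib

open MeasureTheory

namespace FatCantor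

noncomputable section

def ell (n : ℕ) : ℝ := (1/2)^(n+1) + (1/2)^(2*n+1)
def q (n : ℕ) : ℝ := (1/2)^(2*n+2)
def hh (n : ℕ) : ℝ := (1/3)^(n+1)
def w (n : ℕ) : ℝ := 4 * (16/3)^(n+1)

lemma ell_pos (n : ℕ) : 0 < ell n := by unfold ell; positivity
lemma q_pos (n : ℕ) : 0 < q n := by unfold q; positivity
lemma hh_pos (n : ℕ) : 0 < hh n := by unfold hh; positivity
lemma w_pos (n : ℕ) : 0 < w n := by unfold w; positivity

lemma ell_zero : ell 0 = 1 := by norm_num [ell]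

lemma ell_split (n : ℕ) : ell n = ell (n+1) + q n + ell (n+1) := by
  simp only [ell, q]
  ring_nf

lemma ell_le (n : ℕ) : ell n ≤ (1/2)^n := by
  have h1 : ((1:ℝ)/2)^(2*n+1) ≤ (1/2)^(n+1) := by
    apply pow_le_pow_of_le_one (by norm_num) (by norm_num)
    omega
  have : ell n ≤ (1/2)^(n+1) + (1/2)^(n+1) := by
    simpa [ell] using h1
  calc ell n ≤ (1/2)^(n+1) + (1/2)^(n+1) := this
    _ = (1/2)^n := by rw [pow_succ]; ring

lemma w_q_sq (n : ℕ) : w n * (q n / 2)^2 = hh n := by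
  induction n with
  | zero => norm_num [w, q, hh]
  | succ n ih =>
    have hq : q (n+1) = (1/4) * q n := by
      simp only [q]; rw [show 2*(n+1)+2 = (2*n+2)+2 by ring]; rw [pow_add]; ring
    have hw : w (n+1) = (16/3) * w n := by
      simp only [w]; rw [pow_succ]; ring
    have hhh : hh (n+1) = (1/3) * hh n := by
      simp only [hh]; rw [pow_succ]; ring
    rw [hq, hw, hhh, ← ih]; ring

def a : List Bool → ℝ
  | [] => 0
  | (b :: s) => a s + if b then ell (s.length+1) + q s.length else 0

def gl (s : List Bool) : ℝ := a s + ell (s.length+1)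
def gr (s : List Bool) : ℝ := gl s + q s.length

def I (s : List Bool) : Set ℝ := Set.Icc (a s) (a s + ell s.length)

lemma a_false (s : List Bool) : a (false :: s) = a s := by simp [a]
lemma a_true (s : List Bool) : a (true :: s) = gr s := by simp [a, gr, gl]; ring

lemma I_child_subset (b : Bool) (s : List Bool) : I (b :: s) ⊆ I s := by
  cases b
  · rw [I, I, a_false]
    apply Set.Icc_subset_Icc le_rfl
    simp only [List.length_cons]
    have := ell_split s.length
    have := q_pos s.length
    have := ell_pos (s.length + 1)
    nlinarith
  · rw [I, I, a_true]
    apply Set.Icc_subset_Icc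
    · simp [gr, gl]
      have := q_pos s.length
      have := ell_pos (s.length + 1)
      nlinarith
    · simp only [List.length_cons, gr, gl]
      have := ell_split s.length
      nlinarith

lemma gap_subset (s : List Bool) : Set.Ioo (gl s) (gr s) ⊆ I s := by
  intro x hx
  constructor
  · have := ell_pos (s.length + 1); simp only [gl, gr] at hx; linarith [hx.1]
  · have := ell_split s.length
    have := ell_pos (s.length + 1)
    simp only [gl, gr] at hx
    linarith [hx.2]

lemma gap_lt (s : List Bool) : gl s < gr s := by
  simp [gr]; exact q_pos _

lemma child_lb (b : Bool) (s : List Bool) : a s ≤ a (b :: s) := by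
  cases b
  · rw [a_false]
  · rw [a_true, gr, gl]
    have := q_pos s.length
    have := ell_pos (s.length + 1)
    linarith

lemma child_ub (b : Bool) (s : List Bool) :
    a (b :: s) + ell (s.length + 1) ≤ a s + ell s.length := by
  have hsplit := ell_split s.length
  cases b
  · rw [a_false]
    have := q_pos s.length
    have := ell_pos (s.length + 1)
    linarith
  · rw [a_true, gr, gl]
    linarith

lemma disj : ∀ s t : List Bool, s.length = t.length → s ≠ t →
    a s + ell s.length < a t ∨ a t + ell t.length < a s := by
  intro s
  induction s with
  | nil => intro t hl hne; cases t with
    | nil => exact absurd rfl hne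
    | cons c t => simp at hl
  | cons b s ih =>
    intro t hl hne
    cases t with
    | nil => simp at hl
    | cons c t =>
      simp only [List.length_cons, Nat.succ_inj] at hl
      simp only [List.length_cons]
      by_cases hst : s = t
      · subst hst
        have hbc : b ≠ c := by intro h; exact hne (by rw [h])
        have hq := q_pos s.length
        cases b <;> cases c <;> simp_all
        · left
          rw [a_false, a_true, gr, gl]
          linarith
        · right
          rw [a_false, a_true, gr, gl]
          linarith
      · rcases ih t hl hst with h | h
        · left
          calc a (b :: s) + ell (s.length + 1) ≤ a s + ell s.length := child_ub b s
            _ < a t := h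
            _ ≤ a (c :: t) := child_lb c t
        · right
          calc a (c :: t) + ell (t.length + 1) ≤ a t + ell t.length := child_ub c t
            _ < a s := h
            _ ≤ a (b :: s) := child_lb b s

lemma I_disjoint {s t : List Bool} (hl : s.length = t.length) (hne : s ≠ t) :
    Disjoint (I s) (I t) := by
  rw [Set.disjoint_left]
  intro x hs ht
  rcases disj s t hl hne with h | h
  · have h1 := hs.2; have h2 := ht.1; linarith
  · have h1 := ht.2; have h2 := hs.1; linarith

lemma I_unique {x : ℝ} {s t : List Bool} (hl : s.length = t.length)
    (hs : x ∈ I s) (ht : x ∈ I t) : s = t := by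
  by_contra hne
  rcases disj s t hl hne with h | h
  · have := hs.2; have := ht.1; linarith
  · have := ht.2; have := hs.1; linarith

lemma gap_disj : ∀ (t s : List Bool), s.length < t.length →
    ∀ x, x ∈ Set.Ioo (gl s) (gr s) → x ∉ I t := by
  intro t
  induction t with
  | nil => intro s h; simp at h
  | cons c t ih =>
    intro s h x hx hxt
    simp only [List.length_cons] at h
    rcases Nat.lt_or_ge s.length t.length with h' | h'
    · exact ih s h' x hx (I_child_subset c t hxt)
    · have hst : s.length = t.length := by omega
      by_cases hseq : s = t
      · subst hseq
        cases c
        · have : x ≤ a s + ell (s.length + 1) := by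
            have := hxt.2; rw [a_false] at this; simpa using this
          have : gl s < x := hx.1
          rw [gl] at this; linarith
        · have : gr s ≤ x := by have := hxt.1; rw [a_true] at this; exact this
          linarith [hx.2]
      · have hxs : x ∈ I s := gap_subset s hx
        have hxt' : x ∈ I t := I_child_subset c t hxt
        exact hseq (I_unique hst hxs hxt')

def bump (s : List Bool) (y : ℝ) : ℝ :=
  w s.length * max 0 ((y - gl s) * (gr s - y))

def F (n : ℕ) (y : ℝ) : ℝ := ∑ σ : Fin n → Bool, bump (List.ofFn σ) y

def f (y : ℝ) : ℝ := ∑' n, F n y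

def Cn (n : ℕ) : Set ℝ := ⋃ σ : Fin n → Bool, I (List.ofFn σ)

def CC : Set ℝ := ⋂ n, Cn n

def EE : Set ℝ := ⋃ s : List Bool, ({a s, a s + ell s.length} : Set ℝ)

def S : Set ℝ := CC \ EE

lemma bump_nonneg (s : List Bool) (y : ℝ) : 0 ≤ bump s y :=
  mul_nonneg (w_pos _).le (le_max_left _ _)

lemma bump_le (s : List Bool) (y : ℝ) : bump s y ≤ hh s.length := by
  rw [bump, ← w_q_sq s.length]
  apply mul_le_mul_of_nonneg_left _ (w_pos _).le
  rw [max_le_iff]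
  constructor
  · positivity
  · have hq : q s.length = gr s - gl s := by rw [gr]; ring
    rw [hq]
    nlinarith [sq_nonneg (gl s + gr s - 2*y)]

lemma bump_eq_zero {s : List Bool} {y : ℝ} (hy : y ∉ Set.Ioo (gl s) (gr s)) :
    bump s y = 0 := by
  rw [bump, max_eq_left, mul_zero]
  rcases le_or_gt y (gl s) with h | h
  · nlinarith [gap_lt s, le_or_gt y (gr s)]
  · have h2 : gr s ≤ y := by
      by_contra hc
      exact hy ⟨h, lt_of_not_ge hc⟩
    nlinarith
  
lemma bump_ne_zero_mem {s : List Bool} {y : ℝ} (hy : bump s y ≠ 0) :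
    y ∈ Set.Ioo (gl s) (gr s) := by
  by_contra hc
  exact hy (bump_eq_zero hc)

lemma bump_continuous (s : List Bool) : Continuous (bump s) := by
  apply Continuous.mul continuous_const
  exact Continuous.max continuous_const (by continuity)

lemma F_nonneg (n : ℕ) (y : ℝ) : 0 ≤ F n y :=
  Finset.sum_nonneg fun σ _ => bump_nonneg _ _

lemma F_le (n : ℕ) (y : ℝ) : F n y ≤ 2^n * hh n := by
  have : F n y ≤ (Finset.univ : Finset (Fin n → Bool)).card • hh n := by
    apply Finset.sum_le_card_nsmul
    intro σ _
    have := bump_le (List.ofFn σ) y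
    rwa [List.length_ofFn] at this
  rw [Finset.card_univ] at this
  have hcard : Fintype.card (Fin n → Bool) = 2^n := by
    simp [Fintype.card_fun]
  rw [hcard] at this
  rwa [nsmul_eq_mul, Nat.cast_pow, Nat.cast_ofNat] at this

lemma summable_bound : Summable (fun n : ℕ => (2:ℝ)^n * hh n) := by
  have : ∀ n : ℕ, (2:ℝ)^n * hh n = (1/3) * (2/3)^n := by
    intro n
    rw [hh, pow_succ, show ((2:ℝ)/3) = 2 * (1/3) by norm_num, mul_pow]
    ring
  rw [funext this]
  exact (summable_geometric_of_lt_one (by norm_num) (by norm_num)).mul_left _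

lemma F_continuous (n : ℕ) : Continuous (F n) :=
  continuous_finset_sum _ fun σ _ => bump_continuous _

lemma f_continuous : Continuous f := by
  apply continuous_tsum F_continuous summable_bound
  intro n y
  rw [Real.norm_eq_abs, abs_of_nonneg (F_nonneg n y)]
  exact F_le n y

lemma summable_F (y : ℝ) : Summable (fun n => F n y) := by
  apply Summable.of_nonneg_of_le (fun n => F_nonneg n y) (fun n => F_le n y) summable_bound

lemma f_nonneg (y : ℝ) : 0 ≤ f y :=
  tsum_nonneg fun n => F_nonneg n y

lemma bump_le_f (s : List Bool) (y : ℝ) : bump s y ≤ f y := by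
  have h1 : bump s y ≤ F s.length y := by
    rw [F]
    have : s = List.ofFn (fun i => s.get i) := (List.ofFn_get s).symm
    calc bump s y = bump (List.ofFn (fun i => s.get i)) y := by rw [← this]
      _ ≤ _ := Finset.single_le_sum (f := fun σ => bump (List.ofFn σ) y)
          (fun σ _ => bump_nonneg _ _) (Finset.mem_univ _)
  calc bump s y ≤ F s.length y := h1
    _ ≤ f y := Summable.le_tsum (summable_F y) s.length fun n _ => F_nonneg n y

lemma gap_gap {s t : List Bool} (hne : s ≠ t) {x : ℝ}
    (hs : x ∈ Set.Ioo (gl s) (gr s)) : x ∉ Set.Ioo (gl t) (gr t) := by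
  intro ht
  rcases lt_trichotomy s.length t.length with h | h | h
  · exact gap_disj t s h x hs (gap_subset t ht)
  · exact hne (I_unique h (gap_subset s hs) (gap_subset t ht))
  · exact gap_disj s t h x ht (gap_subset s hs)

lemma f_eq_bump {s : List Bool} {x : ℝ} (hx : x ∈ Set.Ioo (gl s) (gr s)) :
    f x = bump s x := by
  have hF : F s.length x = bump s x := by
    rw [F]
    rw [Finset.sum_eq_single_of_mem (fun i => s.get i) (Finset.mem_univ _)]
    · rw [List.ofFn_get]
    · intro σ _ hσ
      apply bump_eq_zero
      intro hmem
      have hne : List.ofFn σ ≠ s := fun h =>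
        hσ (List.ofFn_injective (h.trans (List.ofFn_get s).symm))
      exact gap_gap hne hmem hx
  rw [f]
  rw [tsum_eq_single s.length]
  · exact hF
  · intro n hn
    rw [F]
    apply Finset.sum_eq_zero
    intro σ _
    apply bump_eq_zero
    intro hmem
    have hne : s ≠ List.ofFn σ := by
      intro h
      apply hn
      rw [← List.length_ofFn (f := σ), ← h]
    exact gap_gap hne hx hmem

lemma mem_Cn {x : ℝ} {n : ℕ} (hx : x ∈ CC) : ∃ s : List Bool, s.length = n ∧ x ∈ I s := by
  have := Set.mem_iInter.mp hx n
  rw [Cn, Set.mem_iUnion] at this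
  obtain ⟨σ, hσ⟩ := this
  exact ⟨List.ofFn σ, List.length_ofFn (f := σ), hσ⟩

lemma f_zero_on_C {x : ℝ} (hx : x ∈ CC) : f x = 0 := by
  rw [f]
  have : ∀ n, F n x = 0 := by
    intro n
    rw [F]
    apply Finset.sum_eq_zero
    intro σ _
    apply bump_eq_zero
    intro hmem
    obtain ⟨t, ht, hxt⟩ := mem_Cn (n := n + 1) hx
    refine gap_disj t (List.ofFn σ) ?_ x hmem hxt
    rw [List.length_ofFn, ht]
    omega
  simp [this]

lemma Cn_antitone : Antitone Cn := by
  apply antitone_nat_of_succ_le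
  intro n x hx
  rw [Cn, Set.mem_iUnion] at hx
  obtain ⟨σ, hσ⟩ := hx
  rw [Cn, Set.mem_iUnion]
  refine ⟨fun i => σ i.succ, ?_⟩
  rw [List.ofFn_succ] at hσ
  exact I_child_subset _ _ hσ

lemma Cn_measurable (n : ℕ) : MeasurableSet (Cn n) :=
  MeasurableSet.iUnion fun _ => measurableSet_Icc

lemma two_pow_ell (n : ℕ) : (2:ℝ)^n * ell n = 1/2 + (1/2)^(n+1) := by
  have h1 : (2:ℝ)^n * (1/2)^n = 1 := by rw [← mul_pow]; norm_num
  rw [ell, show 2*n+1 = n + (n+1) by ring, pow_add]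
  linear_combination ((1:ℝ)/2 + (1/2)^(n+1)) * h1

lemma volume_Cn (n : ℕ) : volume (Cn n) = ENNReal.ofReal (1/2 + (1/2)^(n+1)) := by
  rw [Cn, measure_iUnion]
  · have hIcc : ∀ σ : Fin n → Bool, volume (I (List.ofFn σ)) = ENNReal.ofReal (ell n) := by
      intro σ
      rw [I, Real.volume_Icc, List.length_ofFn]
      ring_nf
    rw [tsum_congr hIcc, tsum_fintype]
    rw [Finset.sum_const, Finset.card_univ]
    have hcard : Fintype.card (Fin n → Bool) = 2^n := by simp [Fintype.card_fun]
    rw [hcard, ← two_pow_ell n]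
    rw [nsmul_eq_mul, Nat.cast_pow, Nat.cast_ofNat]
    rw [ENNReal.ofReal_mul (by positivity)]
    congr 1
    rw [ENNReal.ofReal_pow (by norm_num)]
    norm_num
  · intro σ τ hne
    apply I_disjoint (by simp)
    intro h
    exact hne (List.ofFn_injective h)
  · exact fun _ => measurableSet_Icc

lemma volume_CC : volume CC = ENNReal.ofReal (1/2) := by
  have htend := MeasureTheory.tendsto_measure_iInter_atTop (μ := volume) (s := Cn)
    (fun n => (Cn_measurable n).nullMeasurableSet) Cn_antitone
    ⟨0, by rw [volume_Cn]; exact ENNReal.ofReal_ne_top⟩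
  have htend2 : Filter.Tendsto (fun n => volume (Cn n)) Filter.atTop
      (nhds (ENNReal.ofReal (1/2))) := by
    have : Filter.Tendsto (fun n : ℕ => (1:ℝ)/2 + (1/2)^(n+1)) Filter.atTop (nhds (1/2)) := by
      have h0 : Filter.Tendsto (fun n : ℕ => ((1:ℝ)/2)^(n+1)) Filter.atTop (nhds 0) := by
        have := tendsto_pow_atTop_nhds_zero_of_lt_one (by norm_num : (0:ℝ) ≤ 1/2) (by norm_num)
        exact this.comp (Filter.tendsto_add_atTop_nat 1)
      simpa using tendsto_const_nhds.add h0
    have := (ENNReal.continuous_ofReal.tendsto _).comp this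
    simpa [volume_Cn, Function.comp_def] using this
  rw [CC]
  exact tendsto_nhds_unique htend htend2

lemma EE_countable : Set.Countable EE :=
  Set.countable_iUnion fun s => (Set.countable_singleton _).insert _

lemma CC_measurable : MeasurableSet CC :=
  MeasurableSet.iInter fun n => Cn_measurable n

lemma S_measurable : MeasurableSet S :=
  CC_measurable.diff EE_countable.measurableSet

lemma volume_S : volume S = ENNReal.ofReal (1/2) := by
  rw [S, measure_diff_null (EE_countable.measure_zero _), volume_CC]

lemma CC_subset : CC ⊆ Set.Icc (0:ℝ) 1 := by
  intro x hx
  have := Set.mem_iInter.mp hx 0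
  rw [Cn, Set.mem_iUnion] at this
  obtain ⟨σ, hσ⟩ := this
  have h0 : List.ofFn σ = ([] : List Bool) := by
    apply List.eq_nil_of_length_eq_zero
    simp
  rw [h0] at hσ
  rw [I] at hσ
  simpa [a, ell_zero] using hσ

lemma a_mem_EE (s : List Bool) : a s ∈ EE := Set.mem_iUnion.mpr ⟨s, by simp⟩

lemma right_mem_EE (s : List Bool) : a s + ell s.length ∈ EE :=
  Set.mem_iUnion.mpr ⟨s, by simp⟩

lemma a_rep_false (k : ℕ) (s : List Bool) : a (List.replicate k false ++ s) = a s := by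
  induction k with
  | zero => simp
  | succ k ih => rw [List.replicate_succ, List.cons_append, a_false, ih]

lemma a_rep_true (k : ℕ) (s : List Bool) :
    a (List.replicate k true ++ s) + ell ((List.replicate k true ++ s).length)
      = a s + ell s.length := by
  induction k with
  | zero => simp
  | succ k ih =>
    rw [List.replicate_succ, List.cons_append, a_true]
    have hlen : (true :: (List.replicate k true ++ s)).length
        = (List.replicate k true ++ s).length + 1 := rfl
    rw [hlen, gr, gl]
    have := ell_split (List.replicate k true ++ s).length
    linarith

lemma exists_child {x : ℝ} (hx : x ∈ S) (b : Bool) (m : ℕ) :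
    ∃ s : List Bool, m ≤ s.length ∧ x ∈ I (b :: s) := by
  by_contra hcon
  push_neg at hcon
  obtain ⟨s₀, hs₀len, hs₀⟩ := mem_Cn (n := m) hx.1
  have key : ∀ k, x ∈ I (List.replicate k (!b) ++ s₀) := by
    intro k
    induction k with
    | zero => simpa using hs₀
    | succ k ih =>
      obtain ⟨t, htlen, hxt⟩ := mem_Cn (n := m + k + 1) hx.1
      cases t with
      | nil => simp at htlen
      | cons c t' =>
        have ht'len : t'.length = m + k := by simpa using htlen
        have hxt' : x ∈ I t' := I_child_subset c t' hxt
        have hrep_len : (List.replicate k (!b) ++ s₀).length = m + k := by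
          simp [hs₀len]; omega
        have heq : t' = List.replicate k (!b) ++ s₀ :=
          I_unique (by rw [ht'len, hrep_len]) hxt' ih
        have hcb : c = !b := by
          by_contra hc
          have hcb' : c = b := by cases b <;> cases c <;> simp_all
          subst hcb'
          exact hcon t' (by omega) hxt
        rw [hcb, heq] at hxt
        simpa [List.replicate_succ] using hxt
  have hlen : ∀ k, (List.replicate k (!b) ++ s₀).length = k + m := by
    intro k; simp [hs₀len]
  have hsmall : ∀ ε : ℝ, 0 < ε → ∃ k : ℕ, ell (k + m) < ε := by
    intro ε hε
    obtain ⟨k, hk⟩ := exists_pow_lt_of_lt_one hε (by norm_num : (1:ℝ)/2 < 1)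
    refine ⟨k, ?_⟩
    have h1 := ell_le (k + m)
    have h2 : ((1:ℝ)/2)^(k+m) ≤ (1/2)^k :=
      pow_le_pow_of_le_one (by norm_num) (by norm_num) (by omega)
    linarith
  cases b
  · -- b = false, !b = true : x is the right endpoint of I s₀
    have hxEE : x = a s₀ + ell s₀.length := by
      have hub : x ≤ a s₀ + ell s₀.length := by
        have h1 := (key 0).2
        rw [show ((List.replicate 0 (!false) ++ s₀)) = (List.replicate 0 true ++ s₀) by simp] at h1
        have h2 := a_rep_true 0 s₀
        linarith
      have hlb : ∀ k, a s₀ + ell s₀.length - ell (k + m) ≤ x := by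
        intro k
        have h1 := (key k).1
        rw [show ((List.replicate k (!false) ++ s₀)) = (List.replicate k true ++ s₀) by simp] at h1
        have h2 := a_rep_true k s₀
        have h3 : (List.replicate k true ++ s₀).length = k + m := by simp [hs₀len]
        rw [h3] at h2
        linarith
      by_contra hne
      have hlt : x < a s₀ + ell s₀.length := lt_of_le_of_ne hub hne
      obtain ⟨k, hk⟩ := hsmall _ (by linarith : (0:ℝ) < a s₀ + ell s₀.length - x)
      linarith [hlb k]
    exact hx.2 (hxEE ▸ right_mem_EE s₀)
  · -- b = true, !b = false : x is the left endpoint of I s₀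
    have hxEE : x = a s₀ := by
      have hlb : a s₀ ≤ x := by
        have h1 := (key 0).1
        simpa using h1
      have hub : ∀ k, x ≤ a s₀ + ell (k + m) := by
        intro k
        have h1 := (key k).2
        rw [show ((List.replicate k (!true) ++ s₀)) = (List.replicate k false ++ s₀) by simp,
          a_rep_false,
          show (List.replicate k false ++ s₀).length = k + m by simp [hs₀len]] at h1
        exact h1
      by_contra hne
      have hlt : a s₀ < x := lt_of_le_of_ne hlb (Ne.symm hne)
      obtain ⟨k, hk⟩ := hsmall _ (by linarith : (0:ℝ) < x - a s₀)
      linarith [hub k]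
    exact hx.2 (hxEE ▸ a_mem_EE s₀)

lemma eventually_good (M δ : ℝ) (hδ : 0 < δ) :
    ∃ m : ℕ, ∀ n, m ≤ n → ell n < δ ∧ M * ell n ^ 2 < hh n := by
  obtain ⟨k₁, hk₁⟩ := exists_pow_lt_of_lt_one hδ (by norm_num : (1:ℝ)/2 < 1)
  obtain ⟨k₂, hk₂⟩ := pow_unbounded_of_one_lt (3 * |M|) (by norm_num : (1:ℝ) < 4/3)
  refine ⟨max k₁ k₂, fun n hn => ⟨?_, ?_⟩⟩
  · calc ell n ≤ (1/2)^n := ell_le n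
      _ ≤ (1/2)^k₁ := pow_le_pow_of_le_one (by norm_num) (by norm_num)
          (le_trans (le_max_left _ _) hn)
      _ < δ := hk₁
  · have h1 : ell n ^ 2 ≤ ((1/2:ℝ)^n)^2 := by
      have := ell_le n; have := ell_pos n; nlinarith
    have h2 : (((1:ℝ)/2)^n)^2 = (1/4)^n := by
      rw [← pow_mul, mul_comm, pow_mul]; norm_num
    have h3 : (3:ℝ) * |M| < (4/3)^n :=
      lt_of_lt_of_le hk₂ (pow_le_pow_right₀ (by norm_num)
        (le_trans (le_max_right _ _) hn))
    have h4 : ((4:ℝ)/3)^n * (1/4)^n = (1/3)^n := by rw [← mul_pow]; norm_num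
    have h5 : hh n = (1/3) * (1/3)^n := by rw [hh, pow_succ]; ring
    have h6 : M ≤ |M| := le_abs_self M
    have h7 : (0:ℝ) < (1/4)^n := by positivity
    have h8 : ell n ^ 2 ≤ (1/4:ℝ)^n := h2 ▸ h1
    have h9 : M * ell n ^ 2 ≤ |M| * (1/4)^n := by
      have habs : (0:ℝ) ≤ |M| := abs_nonneg M
      nlinarith [sq_nonneg (ell n)]
    have h10 : |M| * ((1:ℝ)/4)^n < hh n := by
      rw [h5, ← h4]
      nlinarith
    linarith

lemma liminf_cond (x : ℝ) : ∃ ξ : ℝ, ∃ C : ℝ, ∃ δ : ℝ, 0 < δ ∧ ∀ y : ℝ, |y - x| < δ →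
    f y - f x - ξ * (y - x) ≥ -C * (y - x) ^ 2 := by
  by_cases hfx : f x = 0
  · refine ⟨0, 0, 1, one_pos, fun y _ => ?_⟩
    rw [hfx]
    have := f_nonneg y
    nlinarith
  · have hex : ∃ n, F n x ≠ 0 := by
      by_contra h
      push_neg at h
      exact hfx (by rw [f]; simp [h])
    obtain ⟨n, hn⟩ := hex
    have hex2 : ∃ σ : Fin n → Bool, bump (List.ofFn σ) x ≠ 0 := by
      by_contra h
      push_neg at h
      exact hn (Finset.sum_eq_zero fun σ _ => h σ)
    obtain ⟨σ, hσ⟩ := hex2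
    set s := List.ofFn σ with hs
    have hxm : x ∈ Set.Ioo (gl s) (gr s) := bump_ne_zero_mem hσ
    refine ⟨w s.length * (gr s + gl s - 2*x), w s.length, 1, one_pos, fun y _ => ?_⟩
    have hfy : w s.length * ((y - gl s) * (gr s - y)) ≤ f y := by
      refine le_trans ?_ (bump_le_f s y)
      rw [bump]
      exact mul_le_mul_of_nonneg_left (le_max_right _ _) (w_pos _).le
    have hfx' : f x = w s.length * ((x - gl s) * (gr s - x)) := by
      rw [f_eq_bump hxm, bump, max_eq_right]
      nlinarith [hxm.1, hxm.2]
    rw [hfx']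
    nlinarith [hfy]

lemma limsup_cond {x : ℝ} (hx : x ∈ S) (ξ M δ : ℝ) (hδ : 0 < δ) :
    ∃ y : ℝ, y ≠ x ∧ |y - x| < δ ∧ (f y - f x - ξ * (y - x)) / (y - x) ^ 2 > M := by
  obtain ⟨m, hgood⟩ := eventually_good M δ hδ
  have hfx : f x = 0 := f_zero_on_C hx.1
  by_cases hξ : 0 ≤ ξ
  · obtain ⟨s, hslen, hxs⟩ := exists_child hx true m
    obtain ⟨hellδ, hMell⟩ := hgood s.length hslen
    set y := (gl s + gr s)/2 with hy
    have hglt := gap_lt s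
    have hym : y ∈ Set.Ioo (gl s) (gr s) := ⟨by rw [hy]; linarith, by rw [hy]; linarith⟩
    have hyx : y < x := lt_of_lt_of_le hym.2 (by rw [← a_true]; exact hxs.1)
    have hbump : bump s y = hh s.length := by
      have h1 : (y - gl s) * (gr s - y) = (q s.length / 2)^2 := by
        rw [hy, gr]; ring
      rw [bump, h1, max_eq_right (by positivity), w_q_sq]
    have hfy : hh s.length ≤ f y := hbump ▸ bump_le_f s y
    have hxIs : x ∈ I s := I_child_subset true s hxs
    have hyIs : y ∈ I s := gap_subset s hym
    have hdist : x - y ≤ ell s.length := by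
      have := hxIs.2; have := hyIs.1; linarith
    have hne : y ≠ x := ne_of_lt hyx
    have hpos : (0:ℝ) < (y - x)^2 := by
      have : y - x ≠ 0 := sub_ne_zero.mpr hne
      positivity
    refine ⟨y, hne, ?_, ?_⟩
    · rw [abs_sub_lt_iff]
      constructor <;> [linarith [ell_pos s.length]; linarith]
    · rw [gt_iff_lt, lt_div_iff₀ hpos]
      have hnum : hh s.length ≤ f y - f x - ξ * (y - x) := by
        rw [hfx]
        nlinarith
      have hsq : (y - x)^2 ≤ ell s.length ^ 2 := by nlinarith [ell_pos s.length]
      rcases le_or_gt M 0 with hM | hM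
      · nlinarith [hh_pos s.length]
      · nlinarith
  · push_neg at hξ
    obtain ⟨s, hslen, hxs⟩ := exists_child hx false m
    obtain ⟨hellδ, hMell⟩ := hgood s.length hslen
    set y := (gl s + gr s)/2 with hy
    have hglt := gap_lt s
    have hym : y ∈ Set.Ioo (gl s) (gr s) := ⟨by rw [hy]; linarith, by rw [hy]; linarith⟩
    have hxy : x < y := by
      have h1 : x ≤ gl s := by
        have := hxs.2
        rw [a_false] at this
        simpa [gl] using this
      exact lt_of_le_of_lt h1 hym.1
    have hbump : bump s y = hh s.length := by
      have h1 : (y - gl s) * (gr s - y) = (q s.length / 2)^2 := by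
        rw [hy, gr]; ring
      rw [bump, h1, max_eq_right (by positivity), w_q_sq]
    have hfy : hh s.length ≤ f y := hbump ▸ bump_le_f s y
    have hxIs : x ∈ I s := I_child_subset false s hxs
    have hyIs : y ∈ I s := gap_subset s hym
    have hdist : y - x ≤ ell s.length := by
      have := hxIs.1; have := hyIs.2; linarith
    have hne : y ≠ x := ne_of_gt hxy
    have hpos : (0:ℝ) < (y - x)^2 := by
      have : y - x ≠ 0 := sub_ne_zero.mpr hne
      positivity
    refine ⟨y, hne, ?_, ?_⟩
    · rw [abs_sub_lt_iff]
      constructor <;> [linarith; linarith [ell_pos s.length]]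
    · rw [gt_iff_lt, lt_div_iff₀ hpos]
      have hnum : hh s.length ≤ f y - f x - ξ * (y - x) := by
        rw [hfx]
        nlinarith
      have hsq : (y - x)^2 ≤ ell s.length ^ 2 := by nlinarith [ell_pos s.length]
      rcases le_or_gt M 0 with hM | hM
      · nlinarith [hh_pos s.length]
      · nlinarith

end

end FatCantor

theorem liminf2_not_implies_limsup2 :
    ∃ f : ℝ → ℝ, Continuous f ∧
      (∀ x : ℝ, ∃ ξ : ℝ, ∃ C : ℝ, ∃ δ : ℝ, 0 < δ ∧ ∀ y : ℝ, |y - x| < δ →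
        f y - f x - ξ * (y - x) ≥ -C * (y - x) ^ 2) ∧
      ∃ S : Set ℝ, MeasurableSet S ∧ S ⊆ Set.Icc (0 : ℝ) 1 ∧
        volume S = ENNReal.ofReal (1 / 2) ∧
        ∀ x ∈ S, ∀ ξ : ℝ, ∀ M : ℝ, ∀ δ : ℝ, 0 < δ → ∃ y : ℝ, y ≠ x ∧ |y - x| < δ ∧
          (f y - f x - ξ * (y - x)) / (y - x) ^ 2 > M := by
  exact ⟨FatCantor.f, FatCantor.f_continuous, FatCantor.liminf_cond, FatCantor.S,
    FatCantor.S_measurable, fun x hx => FatCantor.CC_subset hx.1, FatCantor.volume_S,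
    fun x hx ξ M δ hδ => FatCantor.limsup_cond hx ξ M δ hδ⟩
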